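/- If B₁ and B₂ are two left braces with the same additive group A and φ: B₁ → B₂ is a brace isomorphism, then the corresponding regular subgroups {(g, λ^{(1)}_g)} and {(g, λ^{(2)}_g)} of Hol(A) are conjugate by the element (0, φ) ∈ Hol(A). -/

import Mathlib

/-- The multiplicative group structure on `AddAut A` (composition), as in the older Mathlib,
where `AddAut A` was a multiplicative group; it is now an additive group. -/
instance addAutMulGroup (A : Type*) [Add A] : Group (AddAut A) where
  mul g h := AddEquiv.trans h g
  one := AddEquiv.refl _
  inv := AddEquiv.symm
  mul_assoc _ _ _ := rfl
  one_mul _ := rfl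
  mul_one _ := rfl
  inv_mul_cancel := AddEquiv.self_trans_symm

def holAction (A : Type*) [AddCommGroup A] : AddAut A →* MulAut (Multiplicative A) where
  toFun f := AddEquiv.toMultiplicative f
  map_one' := rfl
  map_mul' _ _ := rfl

/-- The holomorph `Hol(A) = A ⋊ Aut(A)` of an additive abelian group `A`. -/
abbrev Hol (A : Type*) [AddCommGroup A] :=
  SemidirectProduct (Multiplicative A) (AddAut A) (holAction A)

/-- If `B₁` and `B₂` are two left braces with the same additive group `A`
(encoded by their lambda maps `lam1, lam2 : A → AddAut A`, the products being
`a ·ᵢ b = a + lamᵢ a b`) and `φ : B₁ → B₂` is a brace isomorphism (an additive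
automorphism of `A` that is multiplicative for the two products), then the corresponding
regular subgroups `{(g, λ¹_g)}` and `{(g, λ²_g)}` of `Hol(A)` are conjugate by
`(0, φ) ∈ Hol(A)`. -/
theorem stmt4 (A : Type*) [AddCommGroup A]
    (lam1 lam2 : A → AddAut A)
    -- `B₁ = (A, ·₁)` is a left brace with additive group `A`:
    (h1one : lam1 0 = 1) (h1 : ∀ a b : A, lam1 (a + lam1 a b) = lam1 a * lam1 b)
    -- `B₂ = (A, ·₂)` is a left brace with additive group `A`:
    (h2one : lam2 0 = 1) (h2 : ∀ a b : A, lam2 (a + lam2 a b) = lam2 a * lam2 b)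
    -- `φ` is a brace isomorphism from `B₁` to `B₂`:
    (φ : AddAut A) (hφ : ∀ a b : A, φ (a + lam1 a b) = φ a + lam2 (φ a) (φ b)) :
    (fun x : Hol A => (⟨Multiplicative.ofAdd 0, φ⟩ : Hol A) * x *
        (⟨Multiplicative.ofAdd 0, φ⟩ : Hol A)⁻¹) ''
      {x : Hol A | ∃ g : A, x = ⟨Multiplicative.ofAdd g, lam1 g⟩} =
    {x : Hol A | ∃ g : A, x = ⟨Multiplicative.ofAdd g, lam2 g⟩} ∧
    ∀ g : A, (⟨Multiplicative.ofAdd 0, φ⟩ : Hol A) * ⟨Multiplicative.ofAdd g, lam1 g⟩ *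
        (⟨Multiplicative.ofAdd 0, φ⟩ : Hol A)⁻¹ =
      ⟨Multiplicative.ofAdd (φ g), lam2 (φ g)⟩ := by

  have key : ∀ g : A, (⟨Multiplicative.ofAdd 0, φ⟩ : Hol A) * ⟨Multiplicative.ofAdd g, lam1 g⟩ *
        (⟨Multiplicative.ofAdd 0, φ⟩ : Hol A)⁻¹ =
      ⟨Multiplicative.ofAdd (φ g), lam2 (φ g)⟩ := by
    intro g
    have hmul : ∀ a b : A, φ (lam1 a b) = lam2 (φ a) (φ b) := by
      intro a b
      have := hφ a b
      rw [map_add] at this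
      exact add_left_cancel this
    ext
    · simp only [SemidirectProduct.mul_left, SemidirectProduct.inv_left,
        SemidirectProduct.mul_right, SemidirectProduct.inv_right, holAction,
        MonoidHom.coe_mk, OneHom.coe_mk]
      show 0 + φ g + φ (lam1 g (φ.symm (-0))) = φ g
      simp
    · simp only [SemidirectProduct.mul_right, SemidirectProduct.inv_right]
      show (φ * (lam1 g * φ⁻¹)) _ = lam2 (φ g) _
      show φ (lam1 g (φ.symm _)) = _
      rw [hmul g]
      simp
  refine ⟨?_, key⟩
  ext x
  simp only [Set.mem_image, Set.mem_setOf_eq]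
  constructor
  · rintro ⟨y, ⟨g, rfl⟩, rfl⟩
    exact ⟨φ g, key g⟩
  · rintro ⟨g, rfl⟩
    refine ⟨⟨Multiplicative.ofAdd (φ⁻¹ g), lam1 (φ⁻¹ g)⟩, ⟨φ⁻¹ g, rfl⟩, ?_⟩
    show _ * _ * _ = _
    rw [key (φ⁻¹ g), show φ (φ⁻¹ g) = g from φ.apply_symm_apply g]
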